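/- arXiv:2402.10242 — 4 statements merged into one kernel-verified Lean document; each statement's English description precedes it below -/
import Mathlib

section
/- Let U, Û ∈ ℝ^{n×K} have orthonormal columns, let U^TÛ = U_H Λ_H V_H^T be a singular value decomposition of U^TÛ, and set W_U = U_H V_H^T (an orthogonal K×K matrix). Then ‖U^TÛ − W_U‖ ≤ ‖sinΘ(U,Û)‖², where ‖·‖ is the spectral norm and ‖sinΘ(U,Û)‖ = √(1 − σ_K²) with σ_K the smallest singular value of U^TÛ. -/
open Matrix

noncomputable section

namespace SGRDPG

/-- Squared Euclidean norm of a vector. -/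
def sqnorm {d : ℕ} (x : Fin d → ℝ) : ℝ := ∑ j, (x j) ^ 2

/-- Euclidean norm of a vector. -/
def enorm {d : ℕ} (x : Fin d → ℝ) : ℝ := Real.sqrt (sqnorm x)

/-- Spectral (operator) norm of a matrix. -/
def spec {a b : ℕ} (A : Matrix (Fin a) (Fin b) ℝ) : ℝ :=
  sSup {c | ∃ x : Fin b → ℝ, sqnorm x ≤ 1 ∧ c = enorm (A.mulVec x)}

/-- Smallest singular value of a matrix. -/
def sigMin {a b : ℕ} (A : Matrix (Fin a) (Fin b) ℝ) : ℝ :=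
  sInf {c | ∃ x : Fin b → ℝ, sqnorm x = 1 ∧ c = enorm (A.mulVec x)}

/-- `U` has orthonormal columns. -/
def Ortho {a b : ℕ} (U : Matrix (Fin a) (Fin b) ℝ) : Prop := Uᵀ * U = 1

/-- The operator-norm `sinΘ` distance, `‖sinΘ(U,V)‖ = √(1 - σ_K(UᵀV)²)`. -/
def sinOp {n a b : ℕ} (U : Matrix (Fin n) (Fin a) ℝ) (V : Matrix (Fin n) (Fin b) ℝ) : ℝ :=
  Real.sqrt (1 - (sigMin (Uᵀ * V)) ^ 2)

lemma sqnorm_nonneg {d : ℕ} (x : Fin d → ℝ) : 0 ≤ sqnorm x :=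
  Finset.sum_nonneg fun _ _ => sq_nonneg _

lemma enorm_nonneg {d : ℕ} (x : Fin d → ℝ) : 0 ≤ enorm x := Real.sqrt_nonneg _

lemma enorm_le_of_sqnorm_le {d : ℕ} {x : Fin d → ℝ} {c : ℝ} (hc : 0 ≤ c)
    (h : sqnorm x ≤ c ^ 2) : enorm x ≤ c := by
  rw [enorm]
  calc Real.sqrt (sqnorm x) ≤ Real.sqrt (c ^ 2) := Real.sqrt_le_sqrt h
    _ = c := Real.sqrt_sq hc

lemma sqnorm_eq_dot {d : ℕ} (x : Fin d → ℝ) : sqnorm x = x ⬝ᵥ x := by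
  simp [sqnorm, dotProduct, sq]

lemma sqnorm_mulVec_ortho {a b : ℕ} {U : Matrix (Fin a) (Fin b) ℝ} (hU : Ortho U)
    (x : Fin b → ℝ) : sqnorm (U.mulVec x) = sqnorm x := by
  rw [sqnorm_eq_dot, sqnorm_eq_dot, dotProduct_mulVec, ← mulVec_transpose, mulVec_mulVec,
    hU, one_mulVec]

lemma sqnorm_transpose_mulVec_le {a b : ℕ} {U : Matrix (Fin a) (Fin b) ℝ} (hU : Ortho U)
    (y : Fin a → ℝ) : sqnorm (Uᵀ.mulVec y) ≤ sqnorm y := by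
  set z := Uᵀ.mulVec y with hz
  have h1 : y ⬝ᵥ (U.mulVec z) = sqnorm z := by
    rw [dotProduct_mulVec, ← mulVec_transpose, sqnorm_eq_dot]
  have hcs : (y ⬝ᵥ (U.mulVec z)) ^ 2 ≤ sqnorm y * sqnorm (U.mulVec z) := by
    simpa [sqnorm, dotProduct] using
      Finset.sum_mul_sq_le_sq_mul_sq Finset.univ y (U.mulVec z)
  rw [h1, sqnorm_mulVec_ortho hU] at hcs
  nlinarith [sqnorm_nonneg z, sqnorm_nonneg y]

/-- **Lemma: the Procrustes alignment matrix `W_U` is close to `UᵀÛ`.**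
Let `U, Û ∈ O_{n,K}`, let `UᵀÛ = U_H Λ_H V_Hᵀ` be an SVD of `UᵀÛ`, and set
`W_U = U_H V_Hᵀ`.  Then `‖UᵀÛ - W_U‖ ≤ ‖sinΘ(U,Û)‖²`. -/
theorem procrustes_alignment_bound
    (n K : ℕ) (U Uh : Matrix (Fin n) (Fin K) ℝ)
    (hU : Ortho U) (hUh : Ortho Uh)
    -- an SVD of UᵀÛ
    (UH VH : Matrix (Fin K) (Fin K) ℝ) (Λ : Fin K → ℝ)
    (hUH : Ortho UH) (hUH' : UH * UHᵀ = 1)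
    (hVH : Ortho VH) (hVH' : VH * VHᵀ = 1)
    (hΛ : ∀ i, 0 ≤ Λ i)
    (hSVD : Uᵀ * Uh = UH * Matrix.diagonal Λ * VHᵀ) :
    spec (Uᵀ * Uh - UH * VHᵀ) ≤ (sinOp U Uh) ^ 2 := by
  rcases Nat.eq_zero_or_pos K with hK | hK
  · subst hK
    apply Real.sSup_le _ (sq_nonneg _)
    rintro c ⟨x, hx, rfl⟩
    have : enorm ((Uᵀ * Uh - UH * VHᵀ).mulVec x) = 0 := by
      simp [enorm, sqnorm]
    rw [this]
    exact sq_nonneg _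
  · set σ := sigMin (Uᵀ * Uh) with hσdef
    have hσ0 : 0 ≤ σ := by
      apply Real.sInf_nonneg
      rintro c ⟨x, hx, rfl⟩
      exact enorm_nonneg _
    -- value of H on columns of VH
    have hval : ∀ i, (Uᵀ * Uh).mulVec (VH.mulVec (Pi.single i 1)) =
        UH.mulVec (Pi.single i (Λ i)) := by
      intro i
      rw [hSVD, mulVec_mulVec, mul_assoc (UH * Matrix.diagonal Λ), hVH, mul_one,
        mulVec_single, mulVec_single]
      ext j
      simp [Matrix.mul_diagonal]
    have hxi : ∀ i : Fin K, sqnorm (VH.mulVec (Pi.single i 1)) = 1 := by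
      intro i
      rw [sqnorm_mulVec_ortho hVH]
      simp [sqnorm, Pi.single_apply]
    have henorm : ∀ i, enorm ((Uᵀ * Uh).mulVec (VH.mulVec (Pi.single i 1))) = Λ i := by
      intro i
      rw [hval i, enorm, sqnorm_mulVec_ortho hUH]
      have : sqnorm (Pi.single i (Λ i)) = (Λ i) ^ 2 := by
        simp [sqnorm, Pi.single_apply]
      rw [this, Real.sqrt_sq (hΛ i)]
    -- contraction
    have hcontr : ∀ x : Fin K → ℝ, sqnorm ((Uᵀ * Uh).mulVec x) ≤ sqnorm x := by
      intro x
      rw [← mulVec_mulVec]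
      calc sqnorm (Uᵀ.mulVec (Uh.mulVec x)) ≤ sqnorm (Uh.mulVec x) :=
            sqnorm_transpose_mulVec_le hU _
        _ = sqnorm x := sqnorm_mulVec_ortho hUh x
    have hΛle1 : ∀ i, Λ i ≤ 1 := by
      intro i
      rw [← henorm i]
      apply enorm_le_of_sqnorm_le zero_le_one
      rw [one_pow]
      calc sqnorm ((Uᵀ * Uh).mulVec (VH.mulVec (Pi.single i 1)))
          ≤ sqnorm (VH.mulVec (Pi.single i 1)) := hcontr _
        _ = 1 := hxi i
    have hσle : ∀ i, σ ≤ Λ i := by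
      intro i
      apply csInf_le
      · exact ⟨0, by rintro c ⟨x, hx, rfl⟩; exact enorm_nonneg _⟩
      · exact ⟨VH.mulVec (Pi.single i 1), hxi i, (henorm i).symm⟩
    have hσ1 : σ ≤ 1 := (hσle ⟨0, hK⟩).trans (hΛle1 ⟨0, hK⟩)
    have hrhs : (sinOp U Uh) ^ 2 = 1 - σ ^ 2 := by
      rw [sinOp, Real.sq_sqrt (by nlinarith)]
    rw [hrhs]
    -- rewrite the difference
    have h1 : Matrix.diagonal Λ - 1 = Matrix.diagonal fun i => Λ i - 1 := by
      rw [← Matrix.diagonal_one, Matrix.diagonal_sub]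
    have hM : Uᵀ * Uh - UH * VHᵀ = UH * (Matrix.diagonal fun i => Λ i - 1) * VHᵀ := by
      rw [hSVD, ← h1]
      noncomm_ring
    apply Real.sSup_le _ (by nlinarith)
    rintro c ⟨x, hx, rfl⟩
    apply enorm_le_of_sqnorm_le (by nlinarith)
    have hVHT : Ortho VHᵀ := by
      unfold Ortho
      rw [transpose_transpose]
      exact hVH'
    set y := VHᵀ.mulVec x with hy
    have hy1 : sqnorm y ≤ 1 := by
      rw [hy, sqnorm_mulVec_ortho hVHT]
      exact hx
    calc sqnorm ((Uᵀ * Uh - UH * VHᵀ).mulVec x)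
        = sqnorm (UH.mulVec ((Matrix.diagonal fun i => Λ i - 1).mulVec y)) := by
          rw [hM, ← mulVec_mulVec, ← mulVec_mulVec]
      _ = sqnorm ((Matrix.diagonal fun i => Λ i - 1).mulVec y) :=
          sqnorm_mulVec_ortho hUH _
      _ = ∑ i, ((Λ i - 1) * y i) ^ 2 := by simp [sqnorm, mulVec_diagonal]
      _ ≤ ∑ i, (1 - σ ^ 2) ^ 2 * (y i) ^ 2 := by
          apply Finset.sum_le_sum
          intro i _
          have hab : (1 - Λ i) ≤ (1 - σ ^ 2) := by nlinarith [hσle i, hσ0, hσ1]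
          have h2 : (Λ i - 1) ^ 2 ≤ (1 - σ ^ 2) ^ 2 := by nlinarith [hΛle1 i, hab]
          have h3 := mul_le_mul_of_nonneg_right h2 (sq_nonneg (y i))
          nlinarith [h3]
      _ = (1 - σ ^ 2) ^ 2 * sqnorm y := by rw [sqnorm, Finset.mul_sum]
      _ ≤ (1 - σ ^ 2) ^ 2 * 1 := by
          apply mul_le_mul_of_nonneg_left hy1 (sq_nonneg _)
      _ = ((1 - σ ^ 2)) ^ 2 := mul_one _

end SGRDPG
end
end

section
/- Let K ≥ 2, let X ∈ ℝ^{n×K} satisfy X·1_K = 1_n, and let B ∈ ℝ^{K×K} be symmetric. Let X̆ ∈ ℝ^{n×(K−1)} consist of the first K−1 columns of X, and let J = [I_{K−1} | −1_{K−1}] ∈ ℝ^{(K−1)×K} (the identity of size K−1 with an appended column of −1's). Then, with Π = n^{−1}·1_n1_n^T and Π^⊥ = I_n − Π: (i) Π^⊥·X·B·X^T·Π^⊥ = (Π^⊥X̆)·(J·B·J^T)·(Π^⊥X̆)^T; and (ii) all singular values of J lie in the interval [1, √K]. -/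
open Matrix

noncomputable section

namespace SGRDPG

/-- `Π^⊥ = Iₙ - n⁻¹ 1ₙ1ₙᵀ`. -/
def Piperp (n : ℕ) : Matrix (Fin n) (Fin n) ℝ :=
  1 - ((n : ℝ))⁻¹ • Matrix.of fun _ _ => (1 : ℝ)

theorem piperp_const (n m : ℕ) (c : Fin m → ℝ) :
    Piperp n * (Matrix.of fun (_ : Fin n) j => c j) = 0 := by
  ext i j
  have hn : (n : ℝ) ≠ 0 := by
    have : 0 < n := i.pos
    exact_mod_cast this.ne'
  simp only [Piperp, Matrix.sub_mul, Matrix.smul_mul, Matrix.one_mul, Matrix.sub_apply,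
    Matrix.smul_apply, Matrix.mul_apply, Matrix.of_apply, one_mul, smul_eq_mul,
    Matrix.zero_apply, Matrix.one_apply, sub_mul, ite_mul, zero_mul,
    Finset.sum_sub_distrib, Finset.sum_ite_eq, Finset.mem_univ, if_true,
    Finset.sum_const, Finset.card_univ, Fintype.card_fin, nsmul_eq_mul]
  field_simp
  simp

theorem piperp_symm (n : ℕ) : (Piperp n)ᵀ = Piperp n := by
  simp [Piperp, transpose_sub, transpose_smul]; rfl

theorem membership_reduction_aux
    (n m : ℕ) (hm : 1 ≤ m)
    (X : Matrix (Fin n) (Fin (m + 1)) ℝ)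
    (hrow : X.mulVec (fun _ => (1 : ℝ)) = fun _ => (1 : ℝ))
    (B : Matrix (Fin (m + 1)) (Fin (m + 1)) ℝ) (hBsym : Bᵀ = B) :
    (Piperp n * (X * B * Xᵀ) * Piperp n =
      (Piperp n * Matrix.of fun i (j : Fin m) => X i j.castSucc) *
        ((Matrix.of fun (i : Fin m) (j : Fin (m + 1)) =>
            if (j : ℕ) = (i : ℕ) then (1 : ℝ) else if (j : ℕ) = m then -1 else 0) * B *
         (Matrix.of fun (i : Fin m) (j : Fin (m + 1)) =>
            if (j : ℕ) = (i : ℕ) then (1 : ℝ) else if (j : ℕ) = m then -1 else 0)ᵀ) *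
        (Piperp n * Matrix.of fun i (j : Fin m) => X i j.castSucc)ᵀ) ∧
    (1 ≤ sigMin (Matrix.of fun (i : Fin m) (j : Fin (m + 1)) =>
        if (j : ℕ) = (i : ℕ) then (1 : ℝ) else if (j : ℕ) = m then -1 else 0)ᵀ ∧
     spec (Matrix.of fun (i : Fin m) (j : Fin (m + 1)) =>
        if (j : ℕ) = (i : ℕ) then (1 : ℝ) else if (j : ℕ) = m then -1 else 0) ≤
      Real.sqrt ((m + 1 : ℕ) : ℝ)) := by
  set J : Matrix (Fin m) (Fin (m + 1)) ℝ :=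
    Matrix.of fun i j => if (j : ℕ) = (i : ℕ) then (1 : ℝ) else if (j : ℕ) = m then -1 else 0
    with hJ
  set Xb : Matrix (Fin n) (Fin m) ℝ := Matrix.of fun i j => X i j.castSucc with hXb
  have hrowsum : ∀ i, ∑ j, X i j = 1 := by
    intro i
    have := congrFun hrow i
    simpa [Matrix.mulVec, dotProduct] using this
  have hXJ : Xb * J =
      X - Matrix.of fun (_ : Fin n) (j : Fin (m + 1)) => if (j : ℕ) = m then (1 : ℝ) else 0 := by
    ext i j
    simp only [Matrix.mul_apply, hXb, hJ, Matrix.of_apply, Matrix.sub_apply]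
    refine Fin.lastCases ?_ ?_ j
    · have h1 : ∑ k : Fin m, X i k.castSucc = 1 - X i (Fin.last m) := by
        have h := hrowsum i
        rw [Fin.sum_univ_castSucc] at h
        linarith
      have e1 : ∀ k : Fin m,
          (X i k.castSucc * if ((Fin.last m : Fin (m + 1)) : ℕ) = (k : ℕ) then (1 : ℝ)
            else if ((Fin.last m : Fin (m + 1)) : ℕ) = m then -1 else 0) = -(X i k.castSucc) := by
        intro k
        rw [Fin.val_last, if_neg k.isLt.ne', if_pos rfl]
        ring
      rw [Finset.sum_congr rfl fun k _ => e1 k, Fin.val_last, if_pos rfl,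
        Finset.sum_neg_distrib, h1]
      ring
    · intro j0
      have h2 : ((j0.castSucc : Fin (m + 1)) : ℕ) ≠ m := by
        simp only [Fin.coe_castSucc]; exact j0.isLt.ne
      have e1 : ∀ k : Fin m,
          (X i k.castSucc * if ((j0.castSucc : Fin (m + 1)) : ℕ) = (k : ℕ) then (1 : ℝ)
            else if ((j0.castSucc : Fin (m + 1)) : ℕ) = m then -1 else 0) =
          if k = j0 then X i k.castSucc else 0 := by
        intro k
        rw [if_neg h2]
        simp only [Fin.coe_castSucc]
        rcases eq_or_ne k j0 with h | h
        · subst h; simp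
        · rw [if_neg (by rw [Fin.val_eq_val]; exact fun hh => h hh.symm), if_neg h]
          ring
      rw [Finset.sum_congr rfl fun k _ => e1 k,
        Finset.sum_ite_eq' Finset.univ j0 (fun k => X i k.castSucc),
        if_pos (Finset.mem_univ _), if_neg h2, sub_zero]
  have hPX : Piperp n * (Xb * J) = Piperp n * X := by
    rw [hXJ, Matrix.mul_sub, piperp_const, sub_zero]
  have hPiT : (Piperp n)ᵀ = Piperp n := piperp_symm n
  refine ⟨?_, ?_, ?_⟩
  · have e : Piperp n * Xb * J = Piperp n * X := by rw [Matrix.mul_assoc]; exact hPX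
    have e2 : Jᵀ * (Xbᵀ * Piperp n) = Xᵀ * Piperp n := by
      have := congrArg Matrix.transpose e
      simpa [Matrix.transpose_mul, hPiT, Matrix.mul_assoc] using this
    calc Piperp n * (X * B * Xᵀ) * Piperp n
        = (Piperp n * X) * (B * (Xᵀ * Piperp n)) := by simp only [Matrix.mul_assoc]
      _ = (Piperp n * Xb * J) * (B * (Jᵀ * (Xbᵀ * Piperp n))) := by rw [e, e2]
      _ = (Piperp n * Xb) * (J * B * Jᵀ) * (Piperp n * Xb)ᵀ := by
          simp only [Matrix.transpose_mul, hPiT, Matrix.mul_assoc]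
  · -- 1 ≤ sigMin Jᵀ
    have hmv : ∀ (x : Fin m → ℝ),
        sqnorm (Jᵀ.mulVec x) = sqnorm x + (∑ i, x i) ^ 2 := by
      intro x
      have hc : ∀ j0 : Fin m, (Jᵀ.mulVec x) j0.castSucc = x j0 := by
        intro j0
        simp only [Matrix.mulVec, dotProduct, Matrix.transpose_apply, hJ, Matrix.of_apply,
          Fin.coe_castSucc]
        have h2 : (j0 : ℕ) ≠ m := j0.isLt.ne
        have hval : ∀ k : Fin m, ((j0 : ℕ) = (k : ℕ)) = (j0 = k) := by
          intro k; rw [Fin.val_eq_val]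
        simp only [if_neg h2, hval, ite_mul, one_mul, zero_mul, Finset.sum_ite_eq,
          Finset.mem_univ, if_true]
      have hl : (Jᵀ.mulVec x) (Fin.last m) = -∑ i, x i := by
        simp only [Matrix.mulVec, dotProduct, Matrix.transpose_apply, hJ, Matrix.of_apply,
          Fin.val_last]
        have e1 : ∀ k : Fin m, m ≠ (k : ℕ) := fun k => k.isLt.ne'
        simp [e1, Finset.sum_neg_distrib]
      unfold sqnorm
      rw [Fin.sum_univ_castSucc]
      simp only [hc, hl]
      ring
    apply le_csInf
    · refine ⟨enorm (Jᵀ.mulVec (fun i => if i = ⟨0, by omega⟩ then 1 else 0)),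
        fun i => if i = ⟨0, by omega⟩ then 1 else 0, ?_, rfl⟩
      unfold sqnorm
      simp [ite_pow, Finset.sum_ite_eq]
    · rintro c ⟨x, hx, rfl⟩
      have hv := hmv x
      rw [hx] at hv
      unfold enorm
      rw [hv]
      have h1 : (1 : ℝ) = Real.sqrt 1 := by simp
      rw [h1]
      apply Real.sqrt_le_sqrt
      nlinarith [sq_nonneg (∑ i, x i)]
  · -- spec J ≤ sqrt (m+1)
    apply Real.sSup_le
    · rintro c ⟨x, hx, rfl⟩
      set t := x (Fin.last m) with ht
      have hc : ∀ i : Fin m, (J.mulVec x) i = x i.castSucc - t := by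
        intro i
        simp only [Matrix.mulVec, dotProduct, hJ, Matrix.of_apply]
        rw [Fin.sum_univ_castSucc]
        have e1 : ∀ k : Fin m,
            ((if ((k.castSucc : Fin (m + 1)) : ℕ) = (i : ℕ) then (1 : ℝ)
              else if ((k.castSucc : Fin (m + 1)) : ℕ) = m then -1 else 0) * x k.castSucc) =
            if k = i then x k.castSucc else 0 := by
          intro k
          simp only [Fin.coe_castSucc]
          rw [if_neg (show ¬ ((k : ℕ) = m) from k.isLt.ne)]
          rcases eq_or_ne k i with h | h
          · subst h; simp
          · rw [if_neg (show ¬ ((k : ℕ) = (i : ℕ)) from by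
                rw [Fin.val_eq_val]; exact h), if_neg h]
            ring
        rw [Finset.sum_congr rfl fun k _ => e1 k, Fin.val_last, if_neg i.isLt.ne',
          if_pos rfl, Finset.sum_ite_eq' Finset.univ i (fun k => x k.castSucc),
          if_pos (Finset.mem_univ _)]
        ring
      have hs : sqnorm (J.mulVec x) = ∑ i : Fin m, (x i.castSucc - t) ^ 2 := by
        unfold sqnorm
        exact Finset.sum_congr rfl fun i _ => by rw [hc i]
      have hxsplit : sqnorm x = (∑ i : Fin m, (x i.castSucc) ^ 2) + t ^ 2 := by
        unfold sqnorm
        rw [Fin.sum_univ_castSucc]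
      have CS : (∑ i : Fin m, x i.castSucc) ^ 2 ≤ (m : ℝ) * ∑ i : Fin m, (x i.castSucc) ^ 2 := by
        simpa using sq_sum_le_card_mul_sum_sq (s := (Finset.univ : Finset (Fin m)))
          (f := fun i => x i.castSucc)
      have expand : ∑ i : Fin m, (x i.castSucc - t) ^ 2 =
          (∑ i : Fin m, (x i.castSucc) ^ 2) - 2 * t * (∑ i : Fin m, x i.castSucc)
            + (m : ℝ) * t ^ 2 := by
        simp only [sub_sq]
        rw [Finset.sum_add_distrib, Finset.sum_sub_distrib, ← Finset.sum_mul,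
          ← Finset.mul_sum, Finset.sum_const, Finset.card_univ, Fintype.card_fin,
          nsmul_eq_mul]
        ring
      have key : sqnorm (J.mulVec x) ≤ (m : ℝ) + 1 := by
        rw [hs, expand]
        have hxs : (∑ i : Fin m, (x i.castSucc) ^ 2) + t ^ 2 ≤ 1 := by
          rw [← hxsplit]; exact hx
        nlinarith [CS, sq_nonneg (t + ∑ i : Fin m, x i.castSucc),
          sq_nonneg (t - ∑ i : Fin m, x i.castSucc),
          Finset.sum_nonneg (fun (i : Fin m) (_ : i ∈ Finset.univ) => sq_nonneg (x i.castSucc)),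
          sq_nonneg t, (Nat.one_le_cast (α := ℝ)).mpr hm]
      unfold enorm
      rw [show (((m + 1 : ℕ) : ℝ)) = (m : ℝ) + 1 by push_cast; ring]
      exact Real.sqrt_le_sqrt key
    · positivity

/-- **reduction for membership-type matrices.**
Let `K ≥ 2`, let `X ∈ ℝ^{n×K}` have rows summing to one, and let `B ∈ ℝ^{K×K}` be
symmetric.  With `X̆` the first `K-1` columns of `X` and `J = [I_{K-1} | -1_{K-1}]`:
(i) `Π^⊥ X B Xᵀ Π^⊥ = (Π^⊥ X̆)(J B Jᵀ)(Π^⊥ X̆)ᵀ`, and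
(ii) all singular values of `J` lie in `[1, √K]`. -/
theorem membership_reduction
    (n K : ℕ) (hK : 2 ≤ K)
    (X : Matrix (Fin n) (Fin K) ℝ)
    (hrow : X.mulVec (fun _ => (1 : ℝ)) = fun _ => (1 : ℝ))
    (B : Matrix (Fin K) (Fin K) ℝ) (hBsym : Bᵀ = B) :
    -- X̆ : the first K-1 columns of X;  J = [I_{K-1} | -1_{K-1}]
    (Piperp n * (X * B * Xᵀ) * Piperp n =
      (Piperp n * Matrix.of fun i (j : Fin (K - 1)) => X i (Fin.castLE (Nat.sub_le K 1) j)) *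
        ((Matrix.of fun (i : Fin (K - 1)) (j : Fin K) =>
            if (j : ℕ) = (i : ℕ) then (1 : ℝ) else if (j : ℕ) = K - 1 then -1 else 0) * B *
         (Matrix.of fun (i : Fin (K - 1)) (j : Fin K) =>
            if (j : ℕ) = (i : ℕ) then (1 : ℝ) else if (j : ℕ) = K - 1 then -1 else 0)ᵀ) *
        (Piperp n * Matrix.of fun i (j : Fin (K - 1)) =>
            X i (Fin.castLE (Nat.sub_le K 1) j))ᵀ) ∧
    -- all singular values of J lie in [1, √K]
    (1 ≤ sigMin (Matrix.of fun (i : Fin (K - 1)) (j : Fin K) =>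
        if (j : ℕ) = (i : ℕ) then (1 : ℝ) else if (j : ℕ) = K - 1 then -1 else 0)ᵀ ∧
     spec (Matrix.of fun (i : Fin (K - 1)) (j : Fin K) =>
        if (j : ℕ) = (i : ℕ) then (1 : ℝ) else if (j : ℕ) = K - 1 then -1 else 0) ≤
      Real.sqrt K) := by
  obtain ⟨m, rfl⟩ : ∃ m, K = m + 1 := ⟨K - 1, by omega⟩
  exact membership_reduction_aux n m (by omega) X hrow B hBsym

end SGRDPG
end
end

section
/- Let S ∈ {0,1}^{L×M} be a clustering matrix (exactly one entry equal to 1 in each row) such that every cluster has size at least L₀ ≥ 1 (each column of S has at least L₀ ones), and let F ∈ ℝ^{M×d} be any matrix. Then the M-th largest singular value of S·F ∈ ℝ^{L×d} satisfies σ_M(S·F)² ≥ L₀·λ_min(F·F^T). -/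
open Matrix

noncomputable section

namespace SGRDPG

/-- Smallest eigenvalue (of a symmetric matrix), via the Rayleigh quotient. -/
def lamMin {d : ℕ} (A : Matrix (Fin d) (Fin d) ℝ) : ℝ :=
  sInf {c | ∃ x : Fin d → ℝ, sqnorm x = 1 ∧ c = ∑ i, x i * A.mulVec x i}

/-- The `k`-th largest eigenvalue of a symmetric matrix, via the Courant-Fischer
max-min characterization. -/
def lamK {d : ℕ} (k : ℕ) (A : Matrix (Fin d) (Fin d) ℝ) : ℝ :=
  sSup {c | ∃ V : Submodule ℝ (Fin d → ℝ), Module.finrank ℝ V = k ∧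
    ∀ x ∈ V, c * sqnorm x ≤ ∑ i, x i * A.mulVec x i}

/-- The `k`-th largest singular value of a matrix: `σ_k(A) = √(λ_k(AᵀA))`. -/
def sigK {a b : ℕ} (k : ℕ) (A : Matrix (Fin a) (Fin b) ℝ) : ℝ :=
  Real.sqrt (lamK k (Aᵀ * A))

/-- Clustering matrix of a label function (exactly one 1 per row). -/
def clustMat {L M : ℕ} (g : Fin L → Fin M) : Matrix (Fin L) (Fin M) ℝ :=
  Matrix.of fun l m => if g l = m then 1 else 0

lemma sqnorm_eq_zero {d : ℕ} {x : Fin d → ℝ} (h : sqnorm x = 0) : x = 0 := by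
  funext i
  have := (Finset.sum_eq_zero_iff_of_nonneg (fun i _ => sq_nonneg (x i))).1 h i
    (Finset.mem_univ i)
  have : x i = 0 := by nlinarith [this]
  simpa using this

lemma sqnorm_smul {d : ℕ} (c : ℝ) (x : Fin d → ℝ) : sqnorm (c • x) = c ^ 2 * sqnorm x := by
  simp [sqnorm, Finset.mul_sum, mul_pow]

lemma quad_smul {d : ℕ} (A : Matrix (Fin d) (Fin d) ℝ) (c : ℝ) (x : Fin d → ℝ) :
    ∑ i, (c • x) i * A.mulVec (c • x) i = c ^ 2 * ∑ i, x i * A.mulVec x i := by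
  rw [Finset.mul_sum]
  refine Finset.sum_congr rfl fun i _ => ?_
  simp [Matrix.mulVec_smul]
  ring

lemma quad_abs_le {d : ℕ} (A : Matrix (Fin d) (Fin d) ℝ) {x : Fin d → ℝ}
    (hx : sqnorm x = 1) :
    |∑ i, x i * A.mulVec x i| ≤ ∑ i, ∑ j, |A i j| := by
  have hxi : ∀ i, |x i| ≤ 1 := by
    intro i
    have h1 : x i ^ 2 ≤ 1 := hx ▸ Finset.single_le_sum
      (f := fun j => x j ^ 2) (fun j _ => sq_nonneg _) (Finset.mem_univ i)
    nlinarith [abs_nonneg (x i), sq_abs (x i)]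
  calc |∑ i, x i * A.mulVec x i| ≤ ∑ i, |x i * A.mulVec x i| :=
        Finset.abs_sum_le_sum_abs _ _
    _ ≤ ∑ i, ∑ j, |A i j| := by
        refine Finset.sum_le_sum fun i _ => ?_
        rw [abs_mul]
        have h2 : |A.mulVec x i| ≤ ∑ j, |A i j| := by
          have : A.mulVec x i = ∑ j, A i j * x j := by
            simp [Matrix.mulVec, dotProduct]
          rw [this]
          calc |∑ j, A i j * x j| ≤ ∑ j, |A i j * x j| := Finset.abs_sum_le_sum_abs _ _
            _ ≤ ∑ j, |A i j| := by
                refine Finset.sum_le_sum fun j _ => ?_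
                rw [abs_mul]
                calc |A i j| * |x j| ≤ |A i j| * 1 :=
                      mul_le_mul_of_nonneg_left (hxi j) (abs_nonneg _)
                  _ = |A i j| := mul_one _
        calc |x i| * |A.mulVec x i| ≤ 1 * (∑ j, |A i j|) :=
              mul_le_mul (hxi i) h2 (abs_nonneg _) zero_le_one
          _ = ∑ j, |A i j| := one_mul _

lemma lamMin_bddBelow {d : ℕ} (A : Matrix (Fin d) (Fin d) ℝ) :
    BddBelow {c | ∃ x : Fin d → ℝ, sqnorm x = 1 ∧ c = ∑ i, x i * A.mulVec x i} := by
  refine ⟨-(∑ i, ∑ j, |A i j|), ?_⟩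
  rintro c ⟨x, hx, rfl⟩
  have := quad_abs_le A hx
  have := neg_abs_le (∑ i, x i * A.mulVec x i)
  linarith

lemma lamMin_le_quad {d : ℕ} (A : Matrix (Fin d) (Fin d) ℝ) {x : Fin d → ℝ}
    (hx : sqnorm x = 1) : lamMin A ≤ ∑ i, x i * A.mulVec x i :=
  csInf_le (lamMin_bddBelow A) ⟨x, hx, rfl⟩

lemma lamMin_mul_le {d : ℕ} (A : Matrix (Fin d) (Fin d) ℝ) (y : Fin d → ℝ) :
    lamMin A * sqnorm y ≤ ∑ i, y i * A.mulVec y i := by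
  by_cases hy : sqnorm y = 0
  · have hy0 : y = 0 := sqnorm_eq_zero hy
    subst hy0
    simp [hy, sqnorm]
  · have hn : 0 < sqnorm y := lt_of_le_of_ne (sqnorm_nonneg y) (Ne.symm hy)
    set n : ℝ := sqnorm y with hndef
    have hsq : Real.sqrt n > 0 := Real.sqrt_pos.2 hn
    set u : Fin d → ℝ := (Real.sqrt n)⁻¹ • y with hu
    have hun : sqnorm u = 1 := by
      rw [hu, sqnorm_smul]
      rw [inv_pow, Real.sq_sqrt hn.le]
      field_simp
      exact hndef.symm
    have h1 : lamMin A ≤ ∑ i, u i * A.mulVec u i := lamMin_le_quad A hun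
    have h2 : ∑ i, u i * A.mulVec u i = ((Real.sqrt n)⁻¹) ^ 2 * ∑ i, y i * A.mulVec y i := by
      rw [hu, quad_smul]
    rw [h2, inv_pow, Real.sq_sqrt hn.le] at h1
    have h3 : lamMin A * n ≤ n⁻¹ * (∑ i, y i * A.mulVec y i) * n :=
      mul_le_mul_of_nonneg_right h1 hn.le
    calc lamMin A * sqnorm y = lamMin A * n := rfl
      _ ≤ n⁻¹ * (∑ i, y i * A.mulVec y i) * n := h3
      _ = ∑ i, y i * A.mulVec y i := by field_simp
  
lemma quad_transpose {a b : ℕ} (A : Matrix (Fin a) (Fin b) ℝ) (x : Fin b → ℝ) :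
    ∑ i, x i * (Aᵀ * A).mulVec x i = sqnorm (A.mulVec x) := by
  calc ∑ i, x i * (Aᵀ * A).mulVec x i
      = x ⬝ᵥ (Aᵀ *ᵥ (A *ᵥ x)) := by rw [Matrix.mulVec_mulVec]; rfl
    _ = (A *ᵥ x) ⬝ᵥ (A *ᵥ x) := by rw [Matrix.dotProduct_mulVec, Matrix.vecMul_transpose]
    _ = sqnorm (A.mulVec x) := by simp [sqnorm, dotProduct, pow_two]

lemma clustMat_mulVec {L M : ℕ} (g : Fin L → Fin M) (v : Fin M → ℝ) :
    (clustMat g).mulVec v = fun l => v (g l) := by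
  funext l
  simp [clustMat, Matrix.mulVec, dotProduct, ite_mul]

lemma sum_comp_sq {L M : ℕ} (g : Fin L → Fin M) (v : Fin M → ℝ) :
    ∑ l, v (g l) ^ 2 = ∑ m, ((Finset.univ.filter fun l => g l = m).card : ℝ) * v m ^ 2 := by
  rw [← Finset.sum_fiberwise Finset.univ g (fun l => v (g l) ^ 2)]
  refine Finset.sum_congr rfl fun m _ => ?_
  have h : ∀ l ∈ Finset.univ.filter (fun l => g l = m), v (g l) ^ 2 = v m ^ 2 := by
    intro l hl
    rw [(Finset.mem_filter.1 hl).2]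
  rw [Finset.sum_congr rfl h, Finset.sum_const, nsmul_eq_mul]

lemma lamK_bddAbove {d k : ℕ} (hk : 1 ≤ k) (A : Matrix (Fin d) (Fin d) ℝ) :
    BddAbove {c | ∃ V : Submodule ℝ (Fin d → ℝ), Module.finrank ℝ V = k ∧
      ∀ x ∈ V, c * sqnorm x ≤ ∑ i, x i * A.mulVec x i} := by
  refine ⟨∑ i, ∑ j, |A i j|, ?_⟩
  rintro c ⟨V, hV, hq⟩
  have hVne : V ≠ ⊥ := by
    rintro rfl
    rw [finrank_bot] at hV
    omega
  obtain ⟨v, hvV, hv0⟩ := Submodule.exists_mem_ne_zero_of_ne_bot hVne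
  have hn : 0 < sqnorm v := by
    rcases lt_or_eq_of_le (sqnorm_nonneg v) with h | h
    · exact h
    · exact absurd (sqnorm_eq_zero h.symm) hv0
  set u : Fin d → ℝ := (Real.sqrt (sqnorm v))⁻¹ • v with hu
  have huV : u ∈ V := V.smul_mem _ hvV
  have hun : sqnorm u = 1 := by
    rw [hu, sqnorm_smul, inv_pow, Real.sq_sqrt hn.le]
    field_simp
  have := hq u huV
  rw [hun, mul_one] at this
  calc c ≤ ∑ i, u i * A.mulVec u i := this
    _ ≤ |∑ i, u i * A.mulVec u i| := le_abs_self _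
    _ ≤ ∑ i, ∑ j, |A i j| := quad_abs_le A hun

/-- **singular value lower bound for `S F`.**
If `S ∈ {0,1}^{L×M}` is a clustering matrix all of whose clusters have size at least
`L₀ ≥ 1`, and `F ∈ ℝ^{M×d}`, then `σ_M(S F)² ≥ L₀ λ_min(F Fᵀ)`. -/
theorem clustering_matrix_singular_value_bound
    (L M d L₀ : ℕ) (hL₀ : 1 ≤ L₀)
    (g : Fin L → Fin M)
    (hsize : ∀ m : Fin M, L₀ ≤ (Finset.univ.filter fun l => g l = m).card)
    (F : Matrix (Fin M) (Fin d) ℝ) :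
    (L₀ : ℝ) * lamMin (F * Fᵀ) ≤ (sigK M (clustMat g * F)) ^ 2 := by
  set G := F * Fᵀ with hG
  by_cases hmin : lamMin G ≤ 0
  · have h1 : (L₀ : ℝ) * lamMin G ≤ 0 :=
      mul_nonpos_of_nonneg_of_nonpos (Nat.cast_nonneg _) hmin
    exact h1.trans (sq_nonneg _)
  push_neg at hmin
  -- M ≥ 1
  have hM : 1 ≤ M := by
    by_contra hM
    have : M = 0 := by omega
    subst this
    have hempty : {c | ∃ x : Fin 0 → ℝ, sqnorm x = 1 ∧
        c = ∑ i, x i * G.mulVec x i} = ∅ := by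
      ext c
      simp only [Set.mem_setOf_eq, Set.mem_empty_iff_false, iff_false]
      rintro ⟨x, hx, -⟩
      simp [sqnorm] at hx
    have : lamMin G = 0 := by rw [lamMin, hempty, Real.sInf_empty]
    rw [this] at hmin
    exact lt_irrefl _ hmin
  -- quadratic form identity for G
  have quadG : ∀ y : Fin M → ℝ, ∑ m, y m * G.mulVec y m = sqnorm (Fᵀ.mulVec y) := by
    intro y
    have := quad_transpose Fᵀ y
    rwa [Matrix.transpose_transpose] at this
  -- F ᵀ has trivial kernel
  have hinj : Function.Injective (Fᵀ.mulVecLin) := by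
    rw [injective_iff_map_eq_zero]
    intro y hy
    rw [Matrix.mulVecLin_apply] at hy
    by_contra hy0
    have hr : sqnorm (Fᵀ.mulVec y) = 0 := by rw [hy]; simp [sqnorm]
    have h1 : lamMin G * sqnorm y ≤ 0 := by
      rw [← hr, ← quadG y]; exact lamMin_mul_le G y
    have hn : 0 < sqnorm y := by
      rcases lt_or_eq_of_le (sqnorm_nonneg y) with h | h
      · exact h
      · exact absurd (sqnorm_eq_zero h.symm) hy0
    nlinarith
  set V : Submodule ℝ (Fin d → ℝ) := LinearMap.range (Fᵀ.mulVecLin) with hV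
  have hVrank : Module.finrank ℝ V = M := by
    rw [hV, LinearMap.finrank_range_of_inj hinj, Module.finrank_fin_fun]
  set B := clustMat g * F with hB
  set c₀ : ℝ := (L₀ : ℝ) * lamMin G with hc₀
  have hc₀pos : 0 < c₀ := by
    apply mul_pos _ hmin
    exact_mod_cast Nat.lt_of_lt_of_le Nat.zero_lt_one hL₀
  -- the key membership
  have hmem : c₀ ∈ {c | ∃ W : Submodule ℝ (Fin d → ℝ), Module.finrank ℝ W = M ∧
      ∀ x ∈ W, c * sqnorm x ≤ ∑ i, x i * (Bᵀ * B).mulVec x i} := by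
    refine ⟨V, hVrank, ?_⟩
    rintro x ⟨y, rfl⟩
    rw [Matrix.mulVecLin_apply, quad_transpose]
    -- B *ᵥ (Fᵀ *ᵥ y) = clustMat g *ᵥ (G *ᵥ y)
    have hBx : B.mulVec (Fᵀ.mulVec y) = (clustMat g).mulVec (G.mulVec y) := by
      rw [hB, hG]
      rw [← Matrix.mulVec_mulVec, ← Matrix.mulVec_mulVec, Matrix.mulVec_mulVec]
    rw [hBx, clustMat_mulVec]
    have hsum : sqnorm (fun l => G.mulVec y (g l)) = ∑ l, (G.mulVec y) (g l) ^ 2 := rfl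
    rw [hsum, sum_comp_sq]
    -- lower bound by L₀ * sqnorm (G *ᵥ y)
    have hlb : (L₀ : ℝ) * sqnorm (G.mulVec y) ≤
        ∑ m, ((Finset.univ.filter fun l => g l = m).card : ℝ) * (G.mulVec y) m ^ 2 := by
      rw [sqnorm, Finset.mul_sum]
      refine Finset.sum_le_sum fun m _ => ?_
      exact mul_le_mul_of_nonneg_right (by exact_mod_cast hsize m) (sq_nonneg _)
    refine le_trans ?_ hlb
    rw [hc₀, mul_assoc, mul_comm (lamMin G) (sqnorm (Fᵀ.mulVec y))]
    apply mul_le_mul_of_nonneg_left _ (Nat.cast_nonneg _)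
    rw [mul_comm]
    -- lamMin G * sqnorm (Fᵀ *ᵥ y) ≤ sqnorm (G *ᵥ y)
    set r : ℝ := sqnorm (Fᵀ.mulVec y) with hrdef
    set s : ℝ := sqnorm (G.mulVec y) with hsdef
    set n : ℝ := sqnorm y with hndef
    have hr0 : 0 ≤ r := sqnorm_nonneg _
    have hs0 : 0 ≤ s := sqnorm_nonneg _
    have hn0 : 0 ≤ n := sqnorm_nonneg _
    have hray : lamMin G * n ≤ r := by
      rw [hrdef, ← quadG y]; exact lamMin_mul_le G y
    have hcs : r ^ 2 ≤ n * s := by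
      have := Finset.sum_mul_sq_le_sq_mul_sq Finset.univ y (G.mulVec y)
      have hre : r = ∑ m, y m * G.mulVec y m := by rw [hrdef, quadG]
      rw [hre]
      exact this
    rcases eq_or_lt_of_le hn0 with hn | hn
    · have hr : r = 0 := by nlinarith
      rw [hr, mul_zero]
      exact hs0
    · have h1 : lamMin G * r * n ≤ r * r := by nlinarith [mul_le_mul_of_nonneg_right hray hr0]
      have h2 : (lamMin G * r) * n ≤ s * n := by nlinarith
      exact le_of_mul_le_mul_right h2 hn
  have hle : c₀ ≤ lamK M (Bᵀ * B) :=
    le_csSup (lamK_bddAbove hM (Bᵀ * B)) hmem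
  have hnonneg : 0 ≤ lamK M (Bᵀ * B) := le_trans hc₀pos.le hle
  rw [sigK, Real.sq_sqrt hnonneg]
  exact hle

end SGRDPG
end
end

section
/- Let X ∈ ℝ^{n×K} satisfy σ_K(X)² ≥ γ > 0 (the square of the K-th largest singular value of X is at least γ), and for l = 1,…,L let B_l ∈ ℝ^{K×K} be symmetric with σ_min(B_l) ≥ β_l > 0. Set P_l = X·B_l·X^T. Then the K-th largest eigenvalue of Σ_{l=1}^L P_l² satisfies λ_K(Σ_{l=1}^L P_l²) ≥ γ²·Σ_{l=1}^L β_l². -/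
open Matrix

noncomputable section

namespace SGRDPG

lemma sqnorm_unit {d : ℕ} {x : Fin d → ℝ} (hx : 0 < sqnorm x) :
    sqnorm ((Real.sqrt (sqnorm x))⁻¹ • x) = 1 := by
  rw [sqnorm_smul, inv_pow, Real.sq_sqrt (sqnorm_nonneg x)]
  exact inv_mul_cancel₀ hx.ne'

lemma quad_eq {a b : ℕ} (A : Matrix (Fin a) (Fin b) ℝ) (x : Fin b → ℝ) :
    ∑ i, x i * ((Aᵀ * A).mulVec x) i = sqnorm (A.mulVec x) := by
  have h1 : ∑ i, x i * ((Aᵀ * A).mulVec x) i = dotProduct x ((Aᵀ * A).mulVec x) := rfl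
  rw [h1, ← Matrix.mulVec_mulVec, Matrix.dotProduct_mulVec, Matrix.vecMul_transpose]
  simp [sqnorm, dotProduct, sq]

lemma sum_mulVec' {ι : Type*} (s : Finset ι) {a b : ℕ} (M : ι → Matrix (Fin a) (Fin b) ℝ)
    (x : Fin b → ℝ) : (∑ l ∈ s, M l).mulVec x = ∑ l ∈ s, (M l).mulVec x := by
  funext i
  simp [Matrix.mulVec, dotProduct, Matrix.sum_apply, Finset.sum_mul]
  rw [Finset.sum_comm]

lemma abs_le_one_of_unit {d : ℕ} {y : Fin d → ℝ} (hy : sqnorm y = 1) (i : Fin d) :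
    |y i| ≤ 1 := by
  have h1 : y i ^ 2 ≤ 1 := by
    rw [← hy]
    exact Finset.single_le_sum (fun j _ => sq_nonneg (y j)) (Finset.mem_univ i)
  nlinarith [abs_nonneg (y i), sq_abs (y i)]

/-- **spectral lower bound for sums of squared probability matrices.**
If `σ_K(X)² ≥ γ > 0` and the symmetric matrices `B_l` satisfy `σ_min(B_l) ≥ β_l > 0`,
then with `P_l = X B_l Xᵀ`, `λ_K(Σ_l P_l²) ≥ γ² Σ_l β_l²`. -/
theorem sum_of_squares_spectral_lower_bound
    (n K L : ℕ) (X : Matrix (Fin n) (Fin K) ℝ) (γ : ℝ) (hγ : 0 < γ)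
    (hX : γ ≤ (sigK K X) ^ 2)
    (B : Fin L → Matrix (Fin K) (Fin K) ℝ) (β : Fin L → ℝ)
    (hβ : ∀ l, 0 < β l)
    (hBsym : ∀ l, (B l)ᵀ = B l)
    (hB : ∀ l, β l ≤ sigMin (B l)) :
    γ ^ 2 * ∑ l, (β l) ^ 2 ≤
      lamK K (∑ l, (X * B l * Xᵀ) * (X * B l * Xᵀ)) := by
  -- dispose of the degenerate case K = 0
  rcases Nat.eq_zero_or_pos K with hK0 | hKpos
  · exfalso
    subst hK0
    have hset : {c : ℝ | ∃ V : Submodule ℝ (Fin 0 → ℝ), Module.finrank ℝ V = 0 ∧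
        ∀ x ∈ V, c * sqnorm x ≤ ∑ i, x i * (Xᵀ * X).mulVec x i} = Set.univ := by
      ext c
      simp only [Set.mem_setOf_eq, Set.mem_univ, iff_true]
      exact ⟨⊥, finrank_bot ℝ _, fun x _ => by simp [sqnorm]⟩
    unfold sigK lamK at hX
    rw [hset, Real.sSup_univ, Real.sqrt_zero] at hX
    norm_num at hX
    linarith
  -- step 1 : γ ≤ lamK K (XᵀX)
  have hlam : γ ≤ lamK K (Xᵀ * X) := by
    rcases le_or_gt 0 (lamK K (Xᵀ * X)) with h0 | h0
    · rwa [sigK, Real.sq_sqrt h0] at hX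
    · exfalso
      rw [sigK, Real.sqrt_eq_zero'.mpr h0.le] at hX
      norm_num at hX
      linarith
  -- step 2 : γ ‖u‖² ≤ ‖Xu‖² for all u
  have hXq : ∀ u : Fin K → ℝ, γ * sqnorm u ≤ sqnorm (X.mulVec u) := by
    by_contra hcon
    push_neg at hcon
    obtain ⟨u, hu⟩ := hcon
    have hu0 : 0 < sqnorm u := by
      rcases (sqnorm_nonneg u).lt_or_eq with h1 | h1
      · exact h1
      · exfalso
        rw [sqnorm_eq_zero h1.symm] at hu
        simp [sqnorm] at hu
    have hSne : ({c : ℝ | ∃ V : Submodule ℝ (Fin K → ℝ), Module.finrank ℝ V = K ∧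
        ∀ x ∈ V, c * sqnorm x ≤ ∑ i, x i * (Xᵀ * X).mulVec x i}).Nonempty := by
      refine ⟨0, ⊤, ?_, fun x _ => ?_⟩
      · rw [finrank_top, Module.finrank_pi]; simp
      · rw [zero_mul, quad_eq]; exact sqnorm_nonneg _
    have hbound : ∀ c ∈ {c : ℝ | ∃ V : Submodule ℝ (Fin K → ℝ), Module.finrank ℝ V = K ∧
        ∀ x ∈ V, c * sqnorm x ≤ ∑ i, x i * (Xᵀ * X).mulVec x i},
        c ≤ sqnorm (X.mulVec u) / sqnorm u := by
      rintro c ⟨V, hVr, hVq⟩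
      have hVtop : V = ⊤ := Submodule.eq_top_of_finrank_eq
        (by rw [hVr, Module.finrank_pi]; simp)
      have h2 := hVq u (by rw [hVtop]; exact Submodule.mem_top)
      rw [quad_eq] at h2
      exact (le_div_iff₀ hu0).2 h2
    have h1 : lamK K (Xᵀ * X) ≤ sqnorm (X.mulVec u) / sqnorm u := csSup_le hSne hbound
    have h2 : sqnorm (X.mulVec u) / sqnorm u < γ := (div_lt_iff₀ hu0).2 (by linarith)
    linarith
  -- step 3 : β l ² ‖x‖² ≤ ‖B_l x‖²
  have hBq : ∀ (l : Fin L) (x : Fin K → ℝ),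
      β l ^ 2 * sqnorm x ≤ sqnorm ((B l).mulVec x) := by
    intro l x
    rcases (sqnorm_nonneg x).lt_or_eq with hx | hx
    · set s := Real.sqrt (sqnorm x) with hs_def
      have hs : 0 < s := Real.sqrt_pos.2 hx
      set y := s⁻¹ • x with hy_def
      have hy1 : sqnorm y = 1 := sqnorm_unit hx
      have hbdd : BddBelow {c : ℝ | ∃ x : Fin K → ℝ, sqnorm x = 1 ∧
          c = enorm ((B l).mulVec x)} := by
        refine ⟨0, ?_⟩
        rintro c ⟨z, -, rfl⟩
        exact Real.sqrt_nonneg _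
      have hmem : enorm ((B l).mulVec y) ∈ {c : ℝ | ∃ x : Fin K → ℝ, sqnorm x = 1 ∧
          c = enorm ((B l).mulVec x)} := ⟨y, hy1, rfl⟩
      have h1 : β l ≤ enorm ((B l).mulVec y) := le_trans (hB l) (csInf_le hbdd hmem)
      have h2 : β l ^ 2 ≤ sqnorm ((B l).mulVec y) := by
        have h3 : β l ^ 2 ≤ (enorm ((B l).mulVec y)) ^ 2 := pow_le_pow_left₀ (hβ l).le h1 2
        rwa [enorm, Real.sq_sqrt (sqnorm_nonneg _)] at h3
      have hBy : sqnorm ((B l).mulVec y) = (s⁻¹) ^ 2 * sqnorm ((B l).mulVec x) := by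
        rw [hy_def, Matrix.mulVec_smul, sqnorm_smul]
      have hs2 : s ^ 2 = sqnorm x := Real.sq_sqrt hx.le
      calc β l ^ 2 * sqnorm x = β l ^ 2 * s ^ 2 := by rw [hs2]
        _ ≤ ((s⁻¹) ^ 2 * sqnorm ((B l).mulVec x)) * s ^ 2 := by
            apply mul_le_mul_of_nonneg_right _ (sq_nonneg s)
            rw [← hBy]; exact h2
        _ = sqnorm ((B l).mulVec x) := by field_simp
    · rw [sqnorm_eq_zero hx.symm]
      simp [sqnorm, Matrix.mulVec_zero]
  -- step 4 : γ ‖Xu‖² ≤ ‖XᵀXu‖²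
  have hXXq : ∀ u : Fin K → ℝ, γ * sqnorm (X.mulVec u) ≤ sqnorm ((Xᵀ * X).mulVec u) := by
    intro u
    rcases (sqnorm_nonneg u).lt_or_eq with hu | hu
    · have hcs : (∑ i, u i * ((Xᵀ * X).mulVec u) i) ^ 2 ≤
          sqnorm u * sqnorm ((Xᵀ * X).mulVec u) := by
        have h := Finset.sum_mul_sq_le_sq_mul_sq Finset.univ u ((Xᵀ * X).mulVec u)
        simpa [sqnorm] using h
      rw [quad_eq] at hcs
      have h1 := hXq u
      have h2 : γ * sqnorm (X.mulVec u) * sqnorm u ≤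
          sqnorm u * sqnorm ((Xᵀ * X).mulVec u) := by
        nlinarith [sqnorm_nonneg (X.mulVec u)]
      nlinarith
    · rw [sqnorm_eq_zero hu.symm]
      simp [sqnorm, Matrix.mulVec_zero]
  -- the subspace: range of X
  have hinj : Function.Injective (Matrix.mulVecLin X) := by
    rw [← LinearMap.ker_eq_bot]
    rw [LinearMap.ker_eq_bot']
    intro u hu
    rw [Matrix.mulVecLin_apply] at hu
    have h1 := hXq u
    rw [hu] at h1
    have h0 : sqnorm (0 : Fin n → ℝ) = 0 := by simp [sqnorm]
    rw [h0] at h1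
    have h2 : sqnorm u ≤ 0 := by
      by_contra h3
      push_neg at h3
      nlinarith
    exact sqnorm_eq_zero (le_antisymm h2 (sqnorm_nonneg u))
  set V : Submodule ℝ (Fin n → ℝ) := LinearMap.range (Matrix.mulVecLin X) with hV
  have hVr : Module.finrank ℝ V = K := by
    rw [hV, LinearMap.finrank_range_of_inj hinj, Module.finrank_pi]; simp
  -- symmetry of P l and quadratic form identity
  have hPsym : ∀ l, (X * B l * Xᵀ)ᵀ = X * B l * Xᵀ := by
    intro l
    rw [Matrix.transpose_mul, Matrix.transpose_mul, Matrix.transpose_transpose, hBsym l,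
      Matrix.mul_assoc]
  have hA : ∀ x : Fin n → ℝ,
      ∑ i, x i * ((∑ l, (X * B l * Xᵀ) * (X * B l * Xᵀ)).mulVec x) i
        = ∑ l, sqnorm ((X * B l * Xᵀ).mulVec x) := by
    intro x
    rw [sum_mulVec']
    have hswap : ∑ i, x i * (∑ l, ((X * B l * Xᵀ) * (X * B l * Xᵀ)).mulVec x) i
        = ∑ l, ∑ i, x i * (((X * B l * Xᵀ) * (X * B l * Xᵀ)).mulVec x) i := by
      simp only [Finset.sum_apply, Finset.mul_sum]
      rw [Finset.sum_comm]
    rw [hswap]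
    apply Finset.sum_congr rfl
    intro l _
    have : (X * B l * Xᵀ) * (X * B l * Xᵀ) = (X * B l * Xᵀ)ᵀ * (X * B l * Xᵀ) := by
      rw [hPsym l]
    rw [this, quad_eq]
  -- membership of the target value in the sSup set
  have hmem : γ ^ 2 * ∑ l, β l ^ 2 ∈
      {c : ℝ | ∃ W : Submodule ℝ (Fin n → ℝ), Module.finrank ℝ W = K ∧
        ∀ x ∈ W, c * sqnorm x ≤
          ∑ i, x i * (∑ l, (X * B l * Xᵀ) * (X * B l * Xᵀ)).mulVec x i} := by
    refine ⟨V, hVr, ?_⟩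
    intro x hx
    obtain ⟨u, rfl⟩ := hx
    rw [Matrix.mulVecLin_apply, hA]
    have hkey : ∀ l : Fin L, γ ^ 2 * β l ^ 2 * sqnorm (X.mulVec u) ≤
        sqnorm ((X * B l * Xᵀ).mulVec (X.mulVec u)) := by
      intro l
      have hPx : (X * B l * Xᵀ).mulVec (X.mulVec u)
          = X.mulVec ((B l).mulVec ((Xᵀ * X).mulVec u)) := by
        simp only [Matrix.mulVec_mulVec, Matrix.mul_assoc]
      rw [hPx]
      have e1 := hXq ((B l).mulVec ((Xᵀ * X).mulVec u))
      have e2 := hBq l ((Xᵀ * X).mulVec u)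
      have e3 := hXXq u
      have hb := hβ l
      have c1 : γ * (β l ^ 2 * sqnorm ((Xᵀ * X).mulVec u)) ≤
          γ * sqnorm ((B l).mulVec ((Xᵀ * X).mulVec u)) :=
        mul_le_mul_of_nonneg_left e2 hγ.le
      have c2 : γ * β l ^ 2 * (γ * sqnorm (X.mulVec u)) ≤
          γ * β l ^ 2 * sqnorm ((Xᵀ * X).mulVec u) :=
        mul_le_mul_of_nonneg_left e3 (by positivity)
      nlinarith [c1, c2, e1]
    calc (γ ^ 2 * ∑ l, β l ^ 2) * sqnorm (X.mulVec u)
        = ∑ l, γ ^ 2 * β l ^ 2 * sqnorm (X.mulVec u) := by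
          rw [Finset.mul_sum, Finset.sum_mul]
      _ ≤ ∑ l, sqnorm ((X * B l * Xᵀ).mulVec (X.mulVec u)) :=
          Finset.sum_le_sum fun l _ => hkey l
  -- the sSup set is bounded above
  have hbddA : BddAbove {c : ℝ | ∃ W : Submodule ℝ (Fin n → ℝ), Module.finrank ℝ W = K ∧
      ∀ x ∈ W, c * sqnorm x ≤
        ∑ i, x i * (∑ l, (X * B l * Xᵀ) * (X * B l * Xᵀ)).mulVec x i} := by
    set A : Matrix (Fin n) (Fin n) ℝ := ∑ l, (X * B l * Xᵀ) * (X * B l * Xᵀ) with hAdef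
    refine ⟨∑ i, ∑ j, |A i j|, ?_⟩
    rintro c ⟨W, hWr, hWq⟩
    have hWne : W ≠ ⊥ := by
      intro h
      rw [h, finrank_bot] at hWr
      omega
    obtain ⟨z, hzW, hz0⟩ := (Submodule.ne_bot_iff W).1 hWne
    have hz : 0 < sqnorm z := by
      rcases (sqnorm_nonneg z).lt_or_eq with h1 | h1
      · exact h1
      · exact absurd (sqnorm_eq_zero h1.symm) hz0
    set y := (Real.sqrt (sqnorm z))⁻¹ • z with hy_def
    have hyW : y ∈ W := Submodule.smul_mem W _ hzW
    have hy1 : sqnorm y = 1 := sqnorm_unit hz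
    have h1 := hWq y hyW
    rw [hy1, mul_one] at h1
    refine h1.trans ?_
    apply Finset.sum_le_sum
    intro i _
    have hmv : (A.mulVec y) i = ∑ j, A i j * y j := rfl
    rw [hmv, Finset.mul_sum]
    apply Finset.sum_le_sum
    intro j _
    have hyi := abs_le_one_of_unit hy1 i
    have hyj := abs_le_one_of_unit hy1 j
    calc y i * (A i j * y j) ≤ |y i * (A i j * y j)| := le_abs_self _
      _ = |y i| * |A i j| * |y j| := by rw [abs_mul, abs_mul]; ring
      _ ≤ 1 * |A i j| * 1 := by
          apply mul_le_mul (mul_le_mul hyi le_rfl (abs_nonneg _) (by norm_num)) hyj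
            (abs_nonneg _)
          positivity
      _ = |A i j| := by ring
  exact le_csSup hbddA hmem

end SGRDPG
end
end
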